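/- For every matrix F ∈ GL₂(ℤ/Nℤ) there exist an integer q, an integer η coprime to N, δ ∈ {0,1}, and γ ∈ SL₂(ℤ/Nℤ) such that γFγ⁻¹ ∈ D(q,η,δ). In other words, the groups D(q,η,δ) meet every SL₂(ℤ/Nℤ)-conjugation orbit in GL₂(ℤ/Nℤ). -/

import Mathlib

open Matrix

def SolE {R : Type} [CommRing R] (e : R) (M : Matrix (Fin 2) (Fin 2) R) : Prop :=
  ∃ (γ : Matrix.SpecialLinearGroup (Fin 2) R) (η : Rˣ) (x y q : R),
    (γ : Matrix (Fin 2) (Fin 2) R) * M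
      = !![x, (η : R) * y; q * y, x + e * y] * (γ : Matrix (Fin 2) (Fin 2) R)


section moves
variable {R : Type} [CommRing R]

lemma moveW (a b c d : R) :
    !![(0:R), -1; 1, 0] * !![a, b; c, d] = !![d, -c; -b, a] * !![(0:R), -1; 1, 0] := by
  ext i j
  fin_cases i <;> fin_cases j <;> simp [Matrix.mul_apply, Fin.sum_univ_succ] <;> ring

lemma moveU (s a b c d : R) :
    !![(1:R), s; 0, 1] * !![a, b; c, d] =
      !![a + s*c, b + s*(d-a) - s*s*c; c, d - s*c] * !![(1:R), s; 0, 1] := by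
  ext i j
  fin_cases i <;> fin_cases j <;> simp [Matrix.mul_apply, Fin.sum_univ_succ] <;> ring

lemma moveL (s a b c d : R) :
    !![(1:R), 0; s, 1] * !![a, b; c, d] =
      !![a - s*b, b; c + s*(a-d) - s*s*b, d + s*b] * !![(1:R), 0; s, 1] := by
  ext i j
  fin_cases i <;> fin_cases j <;> simp [Matrix.mul_apply, Fin.sum_univ_succ] <;> ring

def Wsl : Matrix.SpecialLinearGroup (Fin 2) R :=
  ⟨!![(0:R), -1; 1, 0], by simp [Matrix.det_fin_two_of]⟩

def Usl (s : R) : Matrix.SpecialLinearGroup (Fin 2) R :=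
  ⟨!![(1:R), s; 0, 1], by simp [Matrix.det_fin_two_of]⟩

def Lsl (s : R) : Matrix.SpecialLinearGroup (Fin 2) R :=
  ⟨!![(1:R), 0; s, 1], by simp [Matrix.det_fin_two_of]⟩

lemma unit_inv_cancel {u : R} (hu : IsUnit u) : u * ((hu.unit⁻¹ : Rˣ) : R) = 1 :=
  IsUnit.mul_val_inv hu

end moves


lemma zmod_classify (p k : ℕ) [Fact p.Prime] (a : ZMod (p^k)) :
    ∃ (i : ℕ) (u : (ZMod (p^k))ˣ), a = (p : ZMod (p^k))^i * (u : ZMod (p^k)) := by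
  have hp : p.Prime := Fact.out
  haveI : NeZero (p^k) := ⟨pow_ne_zero _ hp.pos.ne'⟩
  by_cases ha : a = 0
  · refine ⟨k, 1, ?_⟩
    rw [ha, Units.val_one, mul_one, ← Nat.cast_pow, ZMod.natCast_self]
  · have hv : a.val ≠ 0 := fun h => ha (by rwa [← ZMod.val_eq_zero])
    set n := a.val with hn
    set i := n.factorization p with hi
    have hfac : p ^ i * (n / p ^ i) = n := Nat.ordProj_mul_ordCompl_eq_self n p
    have hnd : ¬ p ∣ (n / p ^ i) := Nat.not_dvd_ordCompl hp hv
    have hu : IsUnit ((n / p^i : ℕ) : ZMod (p^k)) := by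
      rw [ZMod.isUnit_iff_coprime]
      exact (Nat.Prime.coprime_iff_not_dvd hp |>.mpr hnd).symm.pow_right _
    refine ⟨i, hu.unit, ?_⟩
    rw [IsUnit.unit_spec]
    calc a = ((p ^ i * (n / p ^ i) : ℕ) : ZMod (p^k)) := by
              rw [hfac, hn, ZMod.natCast_val, ZMod.cast_id]
    _ = (p : ZMod (p^k))^i * ((n / p^i : ℕ) : ZMod (p^k)) := by push_cast; ring

lemma zmod_dvd_total (p k : ℕ) [Fact p.Prime] (a b : ZMod (p^k)) : a ∣ b ∨ b ∣ a := by
  obtain ⟨i, u, rfl⟩ := zmod_classify p k a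
  obtain ⟨j, w, rfl⟩ := zmod_classify p k b
  have key : ∀ (i j : ℕ) (u w : (ZMod (p^k))ˣ), i ≤ j →
      (p : ZMod (p^k))^i * (u : ZMod (p^k)) ∣ (p : ZMod (p^k))^j * (w : ZMod (p^k)) := by
    intro i j u w h
    refine ⟨(p : ZMod (p^k))^(j-i) * ((u⁻¹ : (ZMod (p^k))ˣ) : ZMod (p^k)) * (w : ZMod (p^k)), ?_⟩
    have h1 : (p : ZMod (p^k))^i * ((p : ZMod (p^k))^(j-i)) = (p : ZMod (p^k))^j := by
      rw [← pow_add, Nat.add_sub_cancel' h]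
    have h2 : (u : ZMod (p^k)) * ((u⁻¹ : (ZMod (p^k))ˣ) : ZMod (p^k)) = 1 := by
      rw [← Units.val_mul, mul_inv_cancel, Units.val_one]
    calc (p : ZMod (p^k))^j * (w : ZMod (p^k))
        = ((p : ZMod (p^k))^i * ((p : ZMod (p^k))^(j-i))) *
            (((u : ZMod (p^k)) * ((u⁻¹ : (ZMod (p^k))ˣ) : ZMod (p^k))) * (w : ZMod (p^k))) := by
          rw [h1, h2, one_mul]
      _ = (p : ZMod (p^k))^i * (u : ZMod (p^k)) *
            ((p : ZMod (p^k))^(j-i) * ((u⁻¹ : (ZMod (p^k))ˣ) : ZMod (p^k)) * (w : ZMod (p^k))) := by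
          ring
  rcases le_total i j with h | h
  · exact Or.inl (key i j u w h)
  · exact Or.inr (key j i w u h)

lemma zmod_nonunit_dvd (p k : ℕ) [Fact p.Prime] (a : ZMod (p^k)) (h : ¬ IsUnit a) :
    (p : ZMod (p^k)) ∣ a := by
  obtain ⟨i, u, rfl⟩ := zmod_classify p k a
  cases i with
  | zero => exact absurd (by simpa using u.isUnit) h
  | succ i => exact ⟨(p : ZMod (p^k))^i * (u : ZMod (p^k)), by ring⟩

lemma zmod_not_unit_p (p k : ℕ) [Fact p.Prime] (hk : k ≠ 0) : ¬ IsUnit (p : ZMod (p^k)) := by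
  have hp : p.Prime := Fact.out
  rw [ZMod.isUnit_iff_coprime]
  intro h
  rw [Nat.coprime_pow_right_iff (Nat.pos_of_ne_zero hk)] at h
  exact hp.one_lt.ne' (by simpa [Nat.Coprime, Nat.gcd_self] using h)

lemma zmod_unit_of_nonunits (p k : ℕ) [Fact p.Prime] (β χ : ZMod (p^k))
    (hβ : ¬ IsUnit β) (hχ : ¬ IsUnit χ) : IsUnit (1 + β - χ) := by
  cases k with
  | zero =>
    haveI : Subsingleton (ZMod (p^0)) := by rw [pow_zero]; infer_instance
    have : (1 + β - χ) = 1 := Subsingleton.elim _ _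
    rw [this]; exact isUnit_one
  | succ k =>
    obtain ⟨b₀, hb⟩ := zmod_nonunit_dvd p (k+1) β hβ
    obtain ⟨c₀, hc⟩ := zmod_nonunit_dvd p (k+1) χ hχ
    by_contra h
    obtain ⟨z, hz⟩ := zmod_nonunit_dvd p (k+1) _ h
    have : (p : ZMod (p^(k+1))) ∣ 1 := by
      refine ⟨z - b₀ + c₀, ?_⟩
      have : (1 : ZMod (p^(k+1))) = (1 + β - χ) - β + χ := by ring
      rw [this, hz, hb, hc]; ring
    exact zmod_not_unit_p p (k+1) (Nat.succ_ne_zero k) (isUnit_of_dvd_one this)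

lemma claimA (p k : ℕ) [Fact p.Prime] (M : Matrix (Fin 2) (Fin 2) (ZMod (p^k))) :
    ∃ (γ : Matrix.SpecialLinearGroup (Fin 2) (ZMod (p^k))) (a b c d : ZMod (p^k)),
      (γ : Matrix (Fin 2) (Fin 2) (ZMod (p^k))) * M = !![a, b; c, d] * (γ : Matrix (Fin 2) (Fin 2) (ZMod (p^k)))
      ∧ b ∣ c ∧ b ∣ (d - a) := by
  set a := M 0 0; set b := M 0 1; set c := M 1 0; set d := M 1 1
  have hM : M = !![a, b; c, d] := Matrix.eta_fin_two M
  have tot := zmod_dvd_total p k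
  -- basic branches
  have case1 : b ∣ c → b ∣ (d - a) → ∃ (γ : Matrix.SpecialLinearGroup (Fin 2) (ZMod (p^k))) (a' b' c' d' : ZMod (p^k)),
      (γ : Matrix (Fin 2) (Fin 2) (ZMod (p^k))) * M = !![a', b'; c', d'] * (γ : Matrix (Fin 2) (Fin 2) (ZMod (p^k)))
      ∧ b' ∣ c' ∧ b' ∣ (d' - a') := fun h1 h2 =>
    ⟨(1 : Matrix.SpecialLinearGroup (Fin 2) (ZMod (p^k))), a, b, c, d, by simp [hM], h1, h2⟩
  have case2 : c ∣ b → c ∣ (d - a) → ∃ (γ : Matrix.SpecialLinearGroup (Fin 2) (ZMod (p^k))) (a' b' c' d' : ZMod (p^k)),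
      (γ : Matrix (Fin 2) (Fin 2) (ZMod (p^k))) * M = !![a', b'; c', d'] * (γ : Matrix (Fin 2) (Fin 2) (ZMod (p^k)))
      ∧ b' ∣ c' ∧ b' ∣ (d' - a') := by
    intro h1 h2
    refine ⟨Wsl, d, -c, -b, a, ?_, ?_, ?_⟩
    · rw [hM]; exact moveW a b c d
    · exact (dvd_neg.mpr (neg_dvd.mpr h1))
    · rw [show a - d = -(d - a) by ring]
      exact (neg_dvd.mpr (dvd_neg.mpr h2))
  rcases tot b c with hbc | hcb
  · rcases tot b (d - a) with hbt | htb
    · exact case1 hbc hbt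
    · -- t ∣ b, b ∣ c
      obtain ⟨β, hβ⟩ := htb
      by_cases hub : IsUnit β
      · exact case1 hbc ⟨(hub.unit⁻¹ : (ZMod (p^k))ˣ), by
          rw [hβ, mul_assoc, unit_inv_cancel hub, mul_one]⟩
      · -- χ : c = t * (β * (c/b ratio))... we have b ∣ c: c = b * c₁ = t * (β * c₁)
        obtain ⟨c₁, hc₁⟩ := hbc
        have hχd : (d - a) ∣ c := ⟨β * c₁, by rw [hc₁, hβ]; ring⟩
        by_cases huc : IsUnit (β * c₁)
        · -- c ∣ t, c ∣ b
          refine case2 ⟨↑huc.unit⁻¹ * β, ?_⟩ ⟨↑huc.unit⁻¹, ?_⟩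
          · rw [hβ, hc₁, hβ]
            calc (d-a) * β = ((d-a) * (β * c₁) * ↑huc.unit⁻¹) * β := by
                  rw [mul_assoc (d-a), unit_inv_cancel huc]; ring
              _ = (d-a) * β * c₁ * (↑huc.unit⁻¹ * β) := by ring
          · rw [hc₁, hβ]
            calc (d-a) = (d-a) * ((β * c₁) * ↑huc.unit⁻¹) := by rw [unit_inv_cancel huc, mul_one]
              _ = (d-a) * β * c₁ * ↑huc.unit⁻¹ := by ring
        · -- U(1) move
          have hu : IsUnit (1 + β - β * c₁) := zmod_unit_of_nonunits p k β (β * c₁) hub huc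
          refine ⟨Usl 1, a + c, b + (d - a) - c, c, d - c, ?_, ?_, ?_⟩
          · rw [hM]
            have h := moveU (1 : ZMod (p^k)) a b c d
            rw [show a + 1*c = a + c from by ring, show b + 1*(d-a) - 1*1*c = b + (d-a) - c from by ring,
              show d - 1*c = d - c from by ring] at h
            exact h
          · refine ⟨↑hu.unit⁻¹ * (β * c₁), ?_⟩
            have hb' : b + (d - a) - c = (d - a) * (1 + β - β * c₁) := by
              rw [hβ, hc₁, hβ]; ring
            rw [hb', hc₁, hβ]
            calc (d-a) * β * c₁ = (d-a) * ((1 + β - β*c₁) * ↑hu.unit⁻¹) * (β * c₁) := by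
                  rw [unit_inv_cancel hu]; ring
              _ = (d-a) * (1 + β - β*c₁) * (↑hu.unit⁻¹ * (β * c₁)) := by ring
          · refine ⟨↑hu.unit⁻¹ * (1 - 2 * (β * c₁)), ?_⟩
            have hb' : b + (d - a) - c = (d - a) * (1 + β - β * c₁) := by
              rw [hβ, hc₁, hβ]; ring
            have hd' : d - c - (a + c) = (d - a) * (1 - 2 * (β * c₁)) := by
              rw [hc₁, hβ]; ring
            rw [hb', hd']
            calc (d-a) * (1 - 2*(β*c₁)) = (d-a) * ((1 + β - β*c₁) * ↑hu.unit⁻¹) * (1 - 2*(β*c₁)) := by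
                  rw [unit_inv_cancel hu]; ring
              _ = (d-a) * (1 + β - β*c₁) * (↑hu.unit⁻¹ * (1 - 2*(β*c₁))) := by ring
  · rcases tot c (d - a) with hct | htc
    · exact case2 hcb hct
    · -- t ∣ c, c ∣ b : so t ∣ b
      obtain ⟨χ, hχ⟩ := htc
      obtain ⟨b₁, hb₁⟩ := hcb
      have htb : (d - a) ∣ b := ⟨χ * b₁, by rw [hb₁, hχ]; ring⟩
      obtain ⟨β, hβ⟩ := htb
      by_cases hub : IsUnit β
      · have hbt : b ∣ (d - a) := ⟨(hub.unit⁻¹ : (ZMod (p^k))ˣ), by rw [hβ, mul_assoc, unit_inv_cancel hub, mul_one]⟩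
        exact case1 (dvd_trans hbt ⟨χ, hχ⟩) hbt
      · by_cases huc : IsUnit χ
        · refine case2 ⟨b₁, hb₁⟩ ⟨↑huc.unit⁻¹, ?_⟩
          rw [hχ]
          calc (d-a) = (d-a) * (χ * ↑huc.unit⁻¹) := by rw [unit_inv_cancel huc, mul_one]
            _ = (d-a) * χ * ↑huc.unit⁻¹ := by ring
        · have hu : IsUnit (1 + β - χ) := zmod_unit_of_nonunits p k β χ hub huc
          refine ⟨Usl 1, a + c, b + (d - a) - c, c, d - c, ?_, ?_, ?_⟩
          · rw [hM]
            have h := moveU (1 : ZMod (p^k)) a b c d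
            rw [show a + 1*c = a + c from by ring, show b + 1*(d-a) - 1*1*c = b + (d-a) - c from by ring,
              show d - 1*c = d - c from by ring] at h
            exact h
          · refine ⟨↑hu.unit⁻¹ * χ, ?_⟩
            have hb' : b + (d - a) - c = (d - a) * (1 + β - χ) := by rw [hβ, hχ]; ring
            rw [hb', hχ]
            calc (d-a) * χ = (d-a) * ((1 + β - χ) * ↑hu.unit⁻¹) * χ := by
                  rw [unit_inv_cancel hu]; ring
              _ = (d-a) * (1 + β - χ) * (↑hu.unit⁻¹ * χ) := by ring
          · refine ⟨↑hu.unit⁻¹ * (1 - 2 * χ), ?_⟩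
            have hb' : b + (d - a) - c = (d - a) * (1 + β - χ) := by rw [hβ, hχ]; ring
            have hd' : d - c - (a + c) = (d - a) * (1 - 2 * χ) := by rw [hχ]; ring
            rw [hb', hd']
            calc (d-a) * (1 - 2*χ) = (d-a) * ((1 + β - χ) * ↑hu.unit⁻¹) * (1 - 2*χ) := by
                  rw [unit_inv_cancel hu]; ring
              _ = (d-a) * (1 + β - χ) * (↑hu.unit⁻¹ * (1 - 2*χ)) := by ring

lemma conj_of_swap {R : Type} [CommRing R] (γ : Matrix.SpecialLinearGroup (Fin 2) R)
    (M T : Matrix (Fin 2) (Fin 2) R) (h : (γ : Matrix (Fin 2) (Fin 2) R) * M = T * γ) :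
    (γ : Matrix (Fin 2) (Fin 2) R) * M * ((γ⁻¹ : Matrix.SpecialLinearGroup (Fin 2) R) : Matrix (Fin 2) (Fin 2) R) = T := by
  have h2 : (γ : Matrix (Fin 2) (Fin 2) R) * ((γ⁻¹ : Matrix.SpecialLinearGroup (Fin 2) R) : Matrix (Fin 2) (Fin 2) R) = 1 := by
    rw [← Matrix.SpecialLinearGroup.coe_mul, mul_inv_cancel, Matrix.SpecialLinearGroup.coe_one]
  rw [h, mul_assoc, h2, mul_one]

lemma finish_zero {R : Type} [CommRing R] (M : Matrix (Fin 2) (Fin 2) R)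
    (γ₀ : Matrix.SpecialLinearGroup (Fin 2) R) (a b c d c₁ m s : R)
    (hE : (γ₀ : Matrix (Fin 2) (Fin 2) R) * M = !![a, b; c, d] * (γ₀ : Matrix (Fin 2) (Fin 2) R))
    (hc : c = b * c₁) (hm : d - a = b * m) (hs : m + 2*s = 0) : SolE (0 : R) M := by
  refine ⟨Lsl s * γ₀, 1, a - s*b, b, c₁ - s*m - s*s, ?_⟩
  have h1 : ((Lsl s * γ₀ : Matrix.SpecialLinearGroup (Fin 2) R) : Matrix (Fin 2) (Fin 2) R) * M
      = !![a - s*b, b; c + s*(a-d) - s*s*b, d + s*b]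
        * ((Lsl s * γ₀ : Matrix.SpecialLinearGroup (Fin 2) R) : Matrix (Fin 2) (Fin 2) R) := by
    rw [Matrix.SpecialLinearGroup.coe_mul, mul_assoc, hE, ← mul_assoc, ← mul_assoc]
    exact congrArg (· * (γ₀ : Matrix (Fin 2) (Fin 2) R)) (moveL s a b c d)
  have e3 : (c₁ - s*m - s*s) * b = c + s*(a-d) - s*s*b := by linear_combination (-1 : R) * hc + s * hm
  have e4 : (a - s*b) + 0*b = d + s*b := by linear_combination -hm - b * hs
  rw [Units.val_one, one_mul, e3, e4]
  exact h1

lemma finish_one {R : Type} [CommRing R] (M : Matrix (Fin 2) (Fin 2) R)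
    (γ₀ : Matrix.SpecialLinearGroup (Fin 2) R) (a b c d c₁ m : R)
    (hE : (γ₀ : Matrix (Fin 2) (Fin 2) R) * M = !![a, b; c, d] * (γ₀ : Matrix (Fin 2) (Fin 2) R))
    (hc : c = b * c₁) (hm : d - a = b * m) (hmu : IsUnit m) : SolE (1 : R) M := by
  refine ⟨γ₀, hmu.unit⁻¹, a, b * m, c₁ * ↑hmu.unit⁻¹, ?_⟩
  have e1 : ((hmu.unit⁻¹ : Rˣ) : R) * (b * m) = b := by
    rw [show ((hmu.unit⁻¹ : Rˣ) : R) * (b * m) = b * (m * ↑hmu.unit⁻¹) from by ring,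
      unit_inv_cancel hmu, mul_one]
  have e2 : (c₁ * ↑hmu.unit⁻¹) * (b * m) = c := by
    rw [show (c₁ * (↑hmu.unit⁻¹:R)) * (b * m) = (b * c₁) * (m * ↑hmu.unit⁻¹) from by ring,
      unit_inv_cancel hmu, mul_one, ← hc]
  have e3 : a + 1 * (b * m) = d := by linear_combination -hm
  rw [e1, e2, e3]
  exact hE

lemma solE_odd_pp (p k : ℕ) [Fact p.Prime] (hp2 : p ≠ 2)
    (M : Matrix (Fin 2) (Fin 2) (ZMod (p^k))) : SolE (0 : ZMod (p^k)) M := by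
  obtain ⟨γ₀, a, b, c, d, hE, hbc, hbt⟩ := claimA p k M
  obtain ⟨c₁, hc⟩ := hbc
  obtain ⟨m, hm⟩ := hbt
  have h2 : IsUnit (2 : ZMod (p^k)) := by
    have h : ((2 : ℕ) : ZMod (p^k)) = 2 := by norm_num
    rw [← h, ZMod.isUnit_iff_coprime]
    exact ((Nat.coprime_primes Nat.prime_two Fact.out).mpr (Ne.symm hp2)).pow_right _
  apply finish_zero M γ₀ a b c d c₁ m (-(↑h2.unit⁻¹ * m)) hE hc hm
  have h22 := unit_inv_cancel h2
  linear_combination (-m) * h22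

lemma solE_two_pp (k : ℕ) (M : Matrix (Fin 2) (Fin 2) (ZMod (2^k))) :
    ∃ δ : ℕ, (δ = 0 ∨ δ = 1) ∧ SolE ((δ : ZMod (2^k))) M := by
  haveI : Fact (Nat.Prime 2) := Nat.fact_prime_two
  obtain ⟨γ₀, a, b, c, d, hE, hbc, hbt⟩ := claimA 2 k M
  obtain ⟨c₁, hc⟩ := hbc
  obtain ⟨m, hm⟩ := hbt
  by_cases hmu : IsUnit m
  · refine ⟨1, Or.inr rfl, ?_⟩
    rw [Nat.cast_one]
    exact finish_one M γ₀ a b c d c₁ m hE hc hm hmu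
  · have hd : ((2:ℕ) : ZMod (2^k)) ∣ m := zmod_nonunit_dvd 2 k m hmu
    obtain ⟨m', hm'⟩ := hd
    refine ⟨0, Or.inl rfl, ?_⟩
    rw [Nat.cast_zero]
    apply finish_zero M γ₀ a b c d c₁ m (-m') hE hc hm
    rw [hm']
    push_cast
    ring

lemma solE_prod {R S₁ S₂ : Type} [CommRing R] [CommRing S₁] [CommRing S₂]
    (f : R ≃+* S₁ × S₂) (e₁ : S₁) (e₂ : S₂) (M : Matrix (Fin 2) (Fin 2) R)
    (h₁ : SolE e₁ (((RingHom.fst S₁ S₂).comp f.toRingHom).mapMatrix M))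
    (h₂ : SolE e₂ (((RingHom.snd S₁ S₂).comp f.toRingHom).mapMatrix M)) :
    SolE (f.symm (e₁, e₂)) M := by
  obtain ⟨γ₁, η₁, x₁, y₁, q₁, E₁⟩ := h₁
  obtain ⟨γ₂, η₂, x₂, y₂, q₂, E₂⟩ := h₂
  set F₁ := (RingHom.fst S₁ S₂).comp f.toRingHom with hF₁
  set F₂ := (RingHom.snd S₁ S₂).comp f.toRingHom with hF₂
  set g : S₁ × S₂ →+* R := f.symm.toRingHom with hg
  have hF1g : ∀ z : S₁ × S₂, F₁ (g z) = z.1 := fun z => congrArg Prod.fst (f.apply_symm_apply z)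
  have hF2g : ∀ z : S₁ × S₂, F₂ (g z) = z.2 := fun z => congrArg Prod.snd (f.apply_symm_apply z)
  set PM : Matrix (Fin 2) (Fin 2) (S₁ × S₂) :=
    Matrix.of (fun i j => ((γ₁ : Matrix (Fin 2) (Fin 2) S₁) i j, (γ₂ : Matrix (Fin 2) (Fin 2) S₂) i j)) with hPM
  have hfstPM : (RingHom.fst S₁ S₂).mapMatrix PM = (γ₁ : Matrix (Fin 2) (Fin 2) S₁) := rfl
  have hsndPM : (RingHom.snd S₁ S₂).mapMatrix PM = (γ₂ : Matrix (Fin 2) (Fin 2) S₂) := rfl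
  have hPMdet : PM.det = 1 := by
    have d1 : (RingHom.fst S₁ S₂) PM.det = 1 := by
      rw [RingHom.map_det, hfstPM, γ₁.prop]
    have d2 : (RingHom.snd S₁ S₂) PM.det = 1 := by
      rw [RingHom.map_det, hsndPM, γ₂.prop]
    exact Prod.ext d1 d2
  have hGdet : (g.mapMatrix PM).det = 1 := by
    rw [← RingHom.map_det, hPMdet, _root_.map_one]
  refine ⟨⟨g.mapMatrix PM, hGdet⟩,
    ⟨g (↑η₁, ↑η₂), g (↑η₁⁻¹, ↑η₂⁻¹), ?_, ?_⟩,
    g (x₁, x₂), g (y₁, y₂), g (q₁, q₂), ?_⟩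
  · rw [← _root_.map_mul, Prod.mk_mul_mk, Units.mul_inv, Units.mul_inv, ← Prod.one_eq_mk, _root_.map_one]
  · rw [← _root_.map_mul, Prod.mk_mul_mk, Units.inv_mul, Units.inv_mul, ← Prod.one_eq_mk, _root_.map_one]
  · -- main equation
    set T : Matrix (Fin 2) (Fin 2) R :=
      !![g (x₁, x₂), g (↑η₁, ↑η₂) * g (y₁, y₂);
         g (q₁, q₂) * g (y₁, y₂), g (x₁, x₂) + f.symm (e₁, e₂) * g (y₁, y₂)] with hT
    show g.mapMatrix PM * M = T * g.mapMatrix PM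
    have hG1 : F₁.mapMatrix (g.mapMatrix PM) = (γ₁ : Matrix (Fin 2) (Fin 2) S₁) := by
      ext i j
      simp [RingHom.mapMatrix_apply, Matrix.map_apply, hF1g, hPM, Matrix.of_apply]
    have hG2 : F₂.mapMatrix (g.mapMatrix PM) = (γ₂ : Matrix (Fin 2) (Fin 2) S₂) := by
      ext i j
      simp [RingHom.mapMatrix_apply, Matrix.map_apply, hF2g, hPM, Matrix.of_apply]
    have hT1 : F₁.mapMatrix T = !![x₁, (η₁ : S₁) * y₁; q₁ * y₁, x₁ + e₁ * y₁] := by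
      ext i j
      fin_cases i <;> fin_cases j <;>
        simp [hT, RingHom.mapMatrix_apply, Matrix.map_apply, _root_.map_mul, _root_.map_add, hF1g] <;>
        simp [show F₁ (f.symm (e₁, e₂)) = e₁ from hF1g (e₁, e₂)]
    have hT2 : F₂.mapMatrix T = !![x₂, (η₂ : S₂) * y₂; q₂ * y₂, x₂ + e₂ * y₂] := by
      ext i j
      fin_cases i <;> fin_cases j <;>
        simp [hT, RingHom.mapMatrix_apply, Matrix.map_apply, _root_.map_mul, _root_.map_add, hF2g] <;>
        simp [show F₂ (f.symm (e₁, e₂)) = e₂ from hF2g (e₁, e₂)]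
    have C1 : F₁.mapMatrix (g.mapMatrix PM * M) = F₁.mapMatrix (T * g.mapMatrix PM) := by
      rw [_root_.map_mul, _root_.map_mul, hG1, hT1]
      exact E₁
    have C2 : F₂.mapMatrix (g.mapMatrix PM * M) = F₂.mapMatrix (T * g.mapMatrix PM) := by
      rw [_root_.map_mul, _root_.map_mul, hG2, hT2]
      exact E₂
    ext i j
    apply f.injective
    refine Prod.ext ?_ ?_
    · exact congrFun (congrFun C1 i) j
    · exact congrFun (congrFun C2 i) j

lemma solE_odd : ∀ (n : ℕ), Odd n → ∀ (M : Matrix (Fin 2) (Fin 2) (ZMod n)), SolE (0 : ZMod n) M := by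
  intro n
  induction n using Nat.recOnPosPrimePosCoprime with
  | prime_pow p k hpp hk =>
    intro hodd M
    haveI : Fact p.Prime := ⟨hpp⟩
    have hp2 : p ≠ 2 := by
      rintro rfl
      exact (Nat.not_even_iff_odd.mpr hodd) ((even_iff_two_dvd).mpr (dvd_pow_self 2 hk.ne'))
    exact solE_odd_pp p k hp2 M
  | zero => intro h; exact absurd h (by decide)
  | one =>
    intro _ M
    exact ⟨1, 1, 0, 0, 0, by ext i j; exact Subsingleton.elim _ _⟩
  | coprime a b ha hb hab iha ihb =>
    intro hodd M
    have hoa : Odd a := (Nat.odd_mul.mp hodd).1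
    have hob : Odd b := (Nat.odd_mul.mp hodd).2
    set f := ZMod.chineseRemainder hab
    have S := solE_prod f 0 0 M (iha hoa _) (ihb hob _)
    have h0 : f.symm ((0 : ZMod a), (0 : ZMod b)) = 0 := by
      rw [show ((0 : ZMod a), (0 : ZMod b)) = (0 : ZMod a × ZMod b) from rfl]
      exact map_zero _
    rwa [h0] at S

theorem stmt_15 (N : ℕ) (hN : 1 ≤ N) (F : GL (Fin 2) (ZMod N)) :
    ∃ (q η ηs L : ℤ) (δ : ℕ),
      Int.gcd η N = 1 ∧ η * ηs ≡ 1 [ZMOD (N : ℤ)] ∧ (δ = 0 ∨ δ = 1) ∧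
      L ≡ 1 [ZMOD ((2 : ℤ) ^ (N.factorization 2))] ∧
      (∀ p : ℕ, p.Prime → p ≠ 2 → p ∣ N → ((p : ℤ) ^ (N.factorization p)) ∣ L) ∧
      ∃ (γ : Matrix.SpecialLinearGroup (Fin 2) (ZMod N)) (x y : ZMod N),
        (γ : Matrix (Fin 2) (Fin 2) (ZMod N)) * (F : Matrix (Fin 2) (Fin 2) (ZMod N)) *
            ((γ⁻¹ : Matrix.SpecialLinearGroup (Fin 2) (ZMod N)) :
              Matrix (Fin 2) (Fin 2) (ZMod N)) =
          !![x, (η : ZMod N) * y;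
             (q : ZMod N) * (ηs : ZMod N) * y, x + (δ : ZMod N) * (L : ZMod N) * y] := by
  obtain ⟨v, m, hm, rfl⟩ : ∃ v m, Odd m ∧ N = 2^v * m := by
    obtain ⟨k, m, hm, h⟩ := Nat.exists_eq_two_pow_mul_odd (Nat.one_le_iff_ne_zero.mp hN)
    exact ⟨k, m, hm, h⟩
  have hm0 : m ≠ 0 := by rintro rfl; exact (by decide : ¬ Odd 0) hm
  have h2m : ¬ 2 ∣ m := by rcases hm with ⟨k, rfl⟩; omega
  have hco : Nat.Coprime (2^v) m := (Nat.Prime.coprime_iff_not_dvd Nat.prime_two |>.mpr h2m).pow_left _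
  haveI : NeZero (2^v * m) := ⟨by positivity⟩
  set f := ZMod.chineseRemainder hco with hf
  set M : Matrix (Fin 2) (Fin 2) (ZMod (2^v * m)) := (F : Matrix (Fin 2) (Fin 2) (ZMod (2^v * m))) with hM
  obtain ⟨δ, hδ, S1⟩ := solE_two_pp v (((RingHom.fst (ZMod (2^v)) (ZMod m)).comp f.toRingHom).mapMatrix M)
  have S2 := solE_odd m hm (((RingHom.snd (ZMod (2^v)) (ZMod m)).comp f.toRingHom).mapMatrix M)
  have S := solE_prod f ((δ : ZMod (2^v))) 0 M S1 S2
  obtain ⟨γ, ηu, x, y, q₀, hEq⟩ := S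
  -- the integer L
  set L : ℤ := ((m * (((m : ZMod (2^v)))⁻¹.val) : ℕ) : ℤ) with hL
  have hL1 : ((L : ℤ) : ZMod (2^v)) = 1 := by
    rw [hL]
    push_cast [Int.cast_natCast]
    have := ZMod.mul_val_inv (m := m) (n := 2^v) hco.symm
    push_cast at this
    exact this
  have hL0 : ((L : ℤ) : ZMod m) = 0 := by
    rw [hL]
    push_cast
    simp [ZMod.natCast_self]
  -- factorization facts
  have hfac : (2^v * m).factorization 2 = v := by
    have h1 : (2^v).factorization 2 = v := by
      rw [Nat.Prime.factorization_pow Nat.prime_two]; simp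
    rw [Nat.factorization_mul (pow_ne_zero v two_ne_zero) hm0, Finsupp.add_apply, h1,
      Nat.factorization_eq_zero_of_not_dvd h2m, add_zero]
  -- the idempotent identification
  have he : f.symm ((δ : ZMod (2^v)), (0 : ZMod m)) = (δ : ZMod (2^v * m)) * ((L : ℤ) : ZMod (2^v * m)) := by
    apply f.injective
    rw [RingEquiv.apply_symm_apply]
    rw [Prod.ext_iff]
    have c1 : ((RingHom.fst (ZMod (2^v)) (ZMod m)).comp f.toRingHom) ((δ : ZMod (2^v * m)) * ((L : ℤ) : ZMod (2^v * m)))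
        = (δ : ZMod (2^v)) := by
      rw [_root_.map_mul, map_natCast, map_intCast, hL1, mul_one]
    have c2 : ((RingHom.snd (ZMod (2^v)) (ZMod m)).comp f.toRingHom) ((δ : ZMod (2^v * m)) * ((L : ℤ) : ZMod (2^v * m)))
        = 0 := by
      rw [_root_.map_mul, map_intCast, hL0, mul_zero]
    exact ⟨c1.symm, c2.symm⟩
  -- integer witnesses
  refine ⟨(((q₀ * (ηu : ZMod (2^v * m))).val : ℕ) : ℤ), (((ηu : ZMod (2^v * m)).val : ℕ) : ℤ),
    ((((ηu⁻¹ : (ZMod (2^v * m))ˣ) : ZMod (2^v * m)).val : ℕ) : ℤ), L, δ, ?_, ?_, hδ, ?_, ?_, γ, x, y, ?_⟩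
  · rw [Int.gcd_natCast_natCast]
    exact ZMod.val_coe_unit_coprime ηu
  · rw [← ZMod.intCast_eq_intCast_iff]
    push_cast
    rw [ZMod.natCast_val, ZMod.natCast_val, ZMod.cast_id, ZMod.cast_id, Units.mul_inv]
  · rw [show ((2:ℤ))^((2^v * m).factorization 2) = ((2^v : ℕ) : ℤ) from by rw [hfac]; push_cast; ring]
    rw [← ZMod.intCast_eq_intCast_iff]
    rw [hL1, Int.cast_one]
  · intro p hp hp2 hpn
    have hfp : (2^v * m).factorization p = m.factorization p := by
      rw [Nat.factorization_mul (pow_ne_zero v two_ne_zero) hm0, Finsupp.add_apply]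
      have h2 : (2^v).factorization p = 0 := by
        rw [Nat.Prime.factorization_pow Nat.prime_two]
        simp [Finsupp.single_apply, Ne.symm hp2]
      rw [h2, zero_add]
    rw [hfp]
    have h1 : (p ^ (m.factorization p) : ℕ) ∣ m := Nat.ordProj_dvd m p
    have h2 : (m : ℕ) ∣ m * (((m : ZMod (2^v)))⁻¹.val) := dvd_mul_right _ _
    have := h1.trans h2
    rw [hL]
    exact_mod_cast Int.natCast_dvd_natCast.mpr this
  · -- final matrix equation
    have hη : ((((ηu : ZMod (2^v * m)).val : ℕ) : ℤ) : ZMod (2^v * m)) = (ηu : ZMod (2^v * m)) := by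
      push_cast
      rw [ZMod.natCast_val, ZMod.cast_id]
    have hq : ((((q₀ * (ηu : ZMod (2^v * m))).val : ℕ) : ℤ) : ZMod (2^v * m))
        * ((((((ηu⁻¹ : (ZMod (2^v * m))ˣ) : ZMod (2^v * m))).val : ℕ) : ℤ) : ZMod (2^v * m)) = q₀ := by
      push_cast
      rw [ZMod.natCast_val, ZMod.natCast_val, ZMod.cast_id, ZMod.cast_id]
      rw [mul_assoc, Units.mul_inv, mul_one]
    have hδL : ((δ : ZMod (2^v * m)) : ZMod (2^v * m)) * ((L : ℤ) : ZMod (2^v * m)) = f.symm ((δ : ZMod (2^v)), (0 : ZMod m)) := by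
      rw [he]
    rw [hη, hq]
    rw [show ((δ : ZMod (2^v * m))) * ((L : ℤ) : ZMod (2^v * m)) = f.symm ((δ : ZMod (2^v)), (0 : ZMod m)) from he.symm]
    exact conj_of_swap γ M _ hEq
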